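/- With the notation of the dual construction, in the Cayley graph Cay(G, D_R⁺): (i) the set {0} × B is a clique of size q^{m(ℓ+1)}; and (ii) every clique S of Cay(G, D_R⁺) satisfies |S| ≤ q^{m(ℓ+1)}. Hence Cay(G, D_R⁺) has clique number q^{m(ℓ+1)}. -/

import Mathlib

/-- The Cayley graph of an additive group `G` with connection set `D` (symmetrized so that
the definition is well formed; when `D = -D` the adjacency `g ~ h` is exactly `g - h ∈ D`). -/
def cayleyGraph {G : Type*} [AddCommGroup G] (D : Set G) : SimpleGraph G where
  Adj g h := g ≠ h ∧ (g - h ∈ D ∨ h - g ∈ D)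
  symm := ⟨fun _ _ hgh => ⟨hgh.1.symm, hgh.2.symm⟩⟩
  loopless := ⟨fun _ hg => hg.1 rfl⟩

/-- The dual generalized Denniston set `D_R⁺ ⊆ A × B` built from a set `Rp ⊆ K` (intended
as `R^⊥`). -/
noncomputable def DenniDual {K A B : Type*} [Field K] [Field A] [Field B]
    [Algebra K A] [Algebra K B] (Rp : Set K) : Set (A × B) :=
  {x : A × B | (x.1 ≠ 0 ∧ x.2 ≠ 0 ∧
      Algebra.norm K x.2 / Algebra.norm K x.1 ∉ Rp) ∨ (x.1 = 0 ∧ x.2 ≠ 0)}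

theorem stmt10 (p s m ℓ r q : ℕ) (hp : p.Prime) (hs : 1 ≤ s) (hm : 1 ≤ m) (hl : 1 ≤ ℓ)
    (hr : r ≤ m) (hq : q = p ^ s)
    (F K A B : Type*) [Field F] [Field K] [Field A] [Field B]
    [Fintype F] [Fintype K] [Fintype A] [Fintype B]
    [Algebra F K] [Algebra K A] [Algebra K B] [Algebra (ZMod p) K]
    (hF : Fintype.card F = q) (hK : Fintype.card K = q ^ m)
    (hA : Fintype.card A = q ^ (m * ℓ)) (hB : Fintype.card B = q ^ (m * (ℓ + 1)))
    (R : Submodule F K) (hRdim : Module.finrank F R = r) :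
    (cayleyGraph (DenniDual {z : K | ∀ y ∈ R, Algebra.trace (ZMod p) K (z * y) = 0}
        : Set (A × B))).IsClique {x : A × B | x.1 = 0} ∧
    ({x : A × B | x.1 = 0}).ncard = q ^ (m * (ℓ + 1)) ∧
    (∀ S : Set (A × B),
        (cayleyGraph (DenniDual {z : K | ∀ y ∈ R, Algebra.trace (ZMod p) K (z * y) = 0}
            : Set (A × B))).IsClique S →
          S.ncard ≤ q ^ (m * (ℓ + 1))) ∧
    (cayleyGraph (DenniDual {z : K | ∀ y ∈ R, Algebra.trace (ZMod p) K (z * y) = 0}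
        : Set (A × B))).cliqueNum = q ^ (m * (ℓ + 1)) := by
  set Rp : Set K := {z : K | ∀ y ∈ R, Algebra.trace (ZMod p) K (z * y) = 0}
  set D : Set (A × B) := DenniDual Rp
  set Gr := (cayleyGraph D)
  -- Part 1: clique
  have hclique : Gr.IsClique {x : A × B | x.1 = 0} := by
    intro x hx y hy hxy
    refine (⟨hxy, Or.inl ?_⟩ : x ≠ y ∧ (x - y ∈ D ∨ y - x ∈ D))
    have hx' : x.1 = 0 := hx
    have hy' : y.1 = 0 := hy
    refine Or.inr ⟨by simp [Prod.fst_sub, hx', hy'], ?_⟩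
    simp only [Prod.snd_sub, sub_ne_zero]
    intro h2
    exact hxy (Prod.ext (hx'.trans hy'.symm) h2)
  -- Part 2: cardinality
  have hcardB : Nat.card B = q ^ (m * (ℓ + 1)) := by rw [Nat.card_eq_fintype_card, hB]
  have e : {x : A × B // x.1 = 0} ≃ B :=
    { toFun := fun x => x.1.2
      invFun := fun b => ⟨(0, b), rfl⟩
      left_inv := fun x => by
        ext
        · exact x.2.symm
        · rfl
      right_inv := fun b => rfl }
  have hcard : ({x : A × B | x.1 = 0}).ncard = q ^ (m * (ℓ + 1)) := by
    rw [← Nat.card_coe_set_eq]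
    exact (Nat.card_congr e).trans hcardB
  -- Part 3: upper bound
  have hbound : ∀ S : Set (A × B), Gr.IsClique S → S.ncard ≤ q ^ (m * (ℓ + 1)) := by
    intro S hS
    have hinj : Set.InjOn Prod.snd S := by
      intro x hx y hy hxy
      by_contra hne
      obtain ⟨-, h2⟩ := (hS hx hy hne : x ≠ y ∧ (x - y ∈ D ∨ y - x ∈ D))
      have : (x.2 - y.2 : B) = 0 := by rw [hxy]; ring
      rcases h2 with h | h <;>
        rcases h with ⟨-, h, -⟩ | ⟨-, h⟩ <;> simp_all
    calc S.ncard = (Prod.snd '' S).ncard := (Set.ncard_image_of_injOn hinj).symm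
      _ ≤ (Set.univ : Set B).ncard := Set.ncard_le_ncard (Set.subset_univ _) Set.finite_univ
      _ = q ^ (m * (ℓ + 1)) := by rw [Set.ncard_univ, hcardB]
  refine ⟨hclique, hcard, hbound, ?_⟩
  -- Part 4: clique number
  have hfin : ({x : A × B | x.1 = 0}).Finite := Set.toFinite _
  have hle : Gr.cliqueNum ≤ q ^ (m * (ℓ + 1)) := by
    obtain ⟨t, ht⟩ := Gr.exists_isNClique_cliqueNum
    rw [← ht.card_eq]
    have := hbound (t : Set (A × B)) ht.isClique
    rwa [Set.ncard_coe_finset] at this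
  have hge : q ^ (m * (ℓ + 1)) ≤ Gr.cliqueNum := by
    have hc : Gr.IsClique (hfin.toFinset : Set (A × B)) := by
      rwa [Set.Finite.coe_toFinset]
    have := SimpleGraph.IsClique.card_le_cliqueNum (tc := hc)
    rwa [← Set.ncard_eq_toFinset_card _ hfin, hcard] at this
  exact le_antisymm hle hge
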